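/- Let h : ℝ × 𝒫₂(ℝ) → ℝ be defined by h(x, m) = B(x − ∫ z dm(z))² with B > 0. Then h fails the Lasry–Lions monotonicity condition strictly: for any two square-integrable real random variables ξ, ξ' with 𝔼ξ ≠ 𝔼ξ', one has 𝔼[h(ξ', ℙ_{ξ'}) + h(ξ, ℙ_ξ) − h(ξ, ℙ_{ξ'}) − h(ξ', ℙ_ξ)] = −2B(𝔼ξ − 𝔼ξ')² < 0. -/

import Mathlib

open MeasureTheory

/-- For `h(x, m) = B(x − ∫ z dm(z))²` with `B > 0` and square-integrable real random
variables `ξ, ξ'` with `𝔼ξ ≠ 𝔼ξ'`, the Lasry–Lions quantity equals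
`−2B(𝔼ξ − 𝔼ξ')²` and is strictly negative. -/
theorem stmt4 {Ω : Type*} [MeasurableSpace Ω] (ℙ : Measure Ω) [IsProbabilityMeasure ℙ]
    (B : ℝ) (hB : 0 < B)
    (ξ ξ' : Ω → ℝ) (hξ : Measurable ξ) (hξ' : Measurable ξ')
    (h2 : MemLp ξ 2 ℙ) (h2' : MemLp ξ' 2 ℙ)
    (hmean : (∫ ω, ξ ω ∂ℙ) ≠ ∫ ω, ξ' ω ∂ℙ) :
    (∫ ω, (B * (ξ' ω - ∫ ω', ξ' ω' ∂ℙ) ^ 2 + B * (ξ ω - ∫ ω', ξ ω' ∂ℙ) ^ 2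
        - B * (ξ ω - ∫ ω', ξ' ω' ∂ℙ) ^ 2 - B * (ξ' ω - ∫ ω', ξ ω' ∂ℙ) ^ 2) ∂ℙ)
      = -2 * B * ((∫ ω, ξ ω ∂ℙ) - ∫ ω, ξ' ω ∂ℙ) ^ 2 ∧
    -2 * B * ((∫ ω, ξ ω ∂ℙ) - ∫ ω, ξ' ω ∂ℙ) ^ 2 < 0 := by
  have hint : Integrable ξ ℙ := h2.integrable (by norm_num)
  have hint' : Integrable ξ' ℙ := h2'.integrable (by norm_num)
  set a := ∫ ω, ξ ω ∂ℙ with ha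
  set b := ∫ ω, ξ' ω ∂ℙ with hb
  have key : (∫ ω, (B * (ξ' ω - b) ^ 2 + B * (ξ ω - a) ^ 2
      - B * (ξ ω - b) ^ 2 - B * (ξ' ω - a) ^ 2) ∂ℙ)
      = ∫ ω, (2 * B * (b - a)) * (ξ ω - ξ' ω) ∂ℙ := by
    apply integral_congr_ae
    filter_upwards with ω
    ring
  constructor
  · rw [key, integral_const_mul, integral_sub hint hint', ← ha, ← hb]
    ring
  · have hne : a - b ≠ 0 := sub_ne_zero.mpr hmean
    have : 0 < (a - b) ^ 2 := by positivity
    nlinarith
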